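/- arXiv:1312.7757 — 3 statements merged into one kernel-verified Lean document; each statement's English description precedes it below -/
import Mathlib

section
/- Let G be a Roelcke precompact Polish group. For every p ∈ Ĝ_{L∧R} and all x, y ∈ Ĝ_L such that px = py, there exist w, u, v ∈ Ĝ_L such that w*u = w*v = p and uy = vx. -/
open Filter Topology Set Pointwise

/-- A topological group is Roelcke precompact if for every neighbourhood `U` of the identity
there is a finite set `F` with `U * F * U = G`. -/
def RoelckePrecompact (G : Type*) [Group G] [TopologicalSpace G] : Prop :=
  ∀ U ∈ 𝓝 (1 : G), ∃ F : Set G, F.Finite ∧ U * F * U = Set.univ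

/-- Abstract axiomatization of the left completion `Ĝ_L` of a topological group `G`:
the completion of `G` with respect to a compatible left-invariant metric, together with
the continuous semigroup law extending the multiplication of `G`. -/
structure LeftCompletion (G : Type*) [Group G] [TopologicalSpace G] where
  L : Type*
  [metL : MetricSpace L]
  completeL : CompleteSpace L
  e : G → L
  dense_e : DenseRange e
  embed_e : Topology.IsEmbedding e
  dist_left_invariant : ∀ k g h : G, dist (e (k * g)) (e (k * h)) = dist (e g) (e h)
  lmul : L → L → L
  cont_lmul : Continuous fun p : L × L => lmul p.1 p.2
  lmul_e : ∀ g h : G, lmul (e g) (e h) = e (g * h)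
  lmul_assoc : ∀ x y z, lmul (lmul x y) z = lmul x (lmul y z)

attribute [instance] LeftCompletion.metL

/-- Abstract axiomatization of the Roelcke completion `Ĝ_{L∧R} = Ĝ_L² ⫽ G` of a topological
group, together with the pairing `(x, y) ↦ x*y = [x,y]` (so that every element of `Ĝ_{L∧R}`
is of the form `x*y`) and the continuous operation `Ĝ_{L∧R} × Ĝ_L → Ĝ_{L∧R}` given by
`(x*y)·z = x*(yz)`. -/
structure RoelckeCompletion (G : Type*) [Group G] [TopologicalSpace G]
    extends LeftCompletion G where
  M : Type*
  [metM : MetricSpace M]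
  completeM : CompleteSpace M
  pair : L → L → M
  pair_surj : ∀ p : M, ∃ x y : L, pair x y = p
  dist_pair : ∀ x y x' y' : L,
    dist (pair x y) (pair x' y') =
      ⨅ gh : G × G,
        max (dist (lmul (e gh.1) x) (lmul (e gh.2) x'))
            (dist (lmul (e gh.1) y) (lmul (e gh.2) y'))
  act : M → L → M
  cont_act : Continuous fun p : M × L => act p.1 p.2
  act_pair : ∀ x y z : L, act (pair x y) z = pair x (lmul y z)

attribute [instance] RoelckeCompletion.metM

section Aux
variable {G : Type*} [Group G] [TopologicalSpace G]

lemma aux_lmul_one (R : LeftCompletion G) (z : R.L) : R.lmul (R.e 1) z = z := by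
  have h1 : Continuous fun z : R.L => R.lmul (R.e 1) z :=
    R.cont_lmul.comp (continuous_const.prodMk continuous_id)
  have := R.dense_e.equalizer h1 continuous_id (funext fun g => by
    simp [Function.comp, R.lmul_e])
  exact congrFun this z

lemma aux_dist_lmul (R : LeftCompletion G) (g : G) (z z' : R.L) :
    dist (R.lmul (R.e g) z) (R.lmul (R.e g) z') = dist z z' := by
  have h1 : Continuous fun p : R.L × R.L => dist (R.lmul (R.e g) p.1) (R.lmul (R.e g) p.2) :=
    Continuous.dist (R.cont_lmul.comp (continuous_const.prodMk continuous_fst))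
      (R.cont_lmul.comp (continuous_const.prodMk continuous_snd))
  have hd : DenseRange (Prod.map R.e R.e) := R.dense_e.prodMap R.dense_e
  have := hd.equalizer h1 continuous_dist (funext fun q => by
    simp only [Function.comp, Prod.map]
    rw [R.lmul_e, R.lmul_e, R.dist_left_invariant])
  exact congrFun this (z, z')

variable (R : RoelckeCompletion G)

lemma aux_bdd (x y x' y' : R.L) : BddBelow (Set.range fun gh : G × G =>
    max (dist (R.lmul (R.e gh.1) x) (R.lmul (R.e gh.2) x'))
        (dist (R.lmul (R.e gh.1) y) (R.lmul (R.e gh.2) y'))) :=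
  ⟨0, by rintro r ⟨i, rfl⟩; exact le_max_of_le_left dist_nonneg⟩

lemma aux_dist_pair_le (x y x' y' : R.L) (g h : G) :
    dist (R.pair x y) (R.pair x' y') ≤
      max (dist (R.lmul (R.e g) x) (R.lmul (R.e h) x'))
          (dist (R.lmul (R.e g) y) (R.lmul (R.e h) y')) := by
  rw [R.dist_pair]
  exact ciInf_le (aux_bdd R x y x' y') (g, h)

lemma aux_pair_lip (x y x' y' : R.L) :
    dist (R.pair x y) (R.pair x' y') ≤ max (dist x x') (dist y y') := by
  have := aux_dist_pair_le R x y x' y' 1 1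
  simpa [aux_lmul_one] using this

lemma aux_cont_pair : Continuous fun q : R.L × R.L => R.pair q.1 q.2 := by
  refine (LipschitzWith.of_dist_le_mul (K := 1) ?_).continuous
  intro q q'
  rw [NNReal.coe_one, one_mul, Prod.dist_eq]
  exact aux_pair_lip R _ _ _ _

lemma aux_pair_lmul_e (g : G) (a b : R.L) :
    R.pair (R.lmul (R.e g) a) (R.lmul (R.e g) b) = R.pair a b := by
  have h0 : dist (R.pair (R.lmul (R.e g) a) (R.lmul (R.e g) b)) (R.pair a b) ≤ 0 := by
    have := aux_dist_pair_le R (R.lmul (R.e g) a) (R.lmul (R.e g) b) a b g⁻¹ 1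
    have ha : R.lmul (R.e g⁻¹) (R.lmul (R.e g) a) = a := by
      rw [← R.lmul_assoc, R.lmul_e, inv_mul_cancel, aux_lmul_one]
    have hb : R.lmul (R.e g⁻¹) (R.lmul (R.e g) b) = b := by
      rw [← R.lmul_assoc, R.lmul_e, inv_mul_cancel, aux_lmul_one]
    simpa [ha, hb, aux_lmul_one] using this
  exact dist_le_zero.mp h0

lemma aux_pair_lmul (z a b : R.L) :
    R.pair (R.lmul z a) (R.lmul z b) = R.pair a b := by
  have h1 : Continuous fun z : R.L => R.pair (R.lmul z a) (R.lmul z b) :=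
    (aux_cont_pair R).comp
      ((R.cont_lmul.comp (continuous_id.prodMk continuous_const)).prodMk
       (R.cont_lmul.comp (continuous_id.prodMk continuous_const)))
  have := R.dense_e.equalizer h1 continuous_const (funext fun g => by
    simp only [Function.comp]
    exact aux_pair_lmul_e R g a b)
  exact congrFun this z

end Aux

section Aux2
variable {G : Type*} [Group G] [TopologicalSpace G] (R : RoelckeCompletion G)

lemma aux_pair_eq_seq {A B A' B' : R.L} (h : R.pair A B = R.pair A' B') :
    ∃ k : ℕ → G,
      Tendsto (fun n => R.lmul (R.e (k n)) A') atTop (𝓝 A) ∧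
      Tendsto (fun n => R.lmul (R.e (k n)) B') atTop (𝓝 B) := by
  have h0 : (⨅ gh : G × G,
      max (dist (R.lmul (R.e gh.1) A) (R.lmul (R.e gh.2) A'))
          (dist (R.lmul (R.e gh.1) B) (R.lmul (R.e gh.2) B'))) = 0 := by
    rw [← R.dist_pair, h, dist_self]
  have key : ∀ n : ℕ, ∃ gh : G × G,
      max (dist (R.lmul (R.e gh.1) A) (R.lmul (R.e gh.2) A'))
          (dist (R.lmul (R.e gh.1) B) (R.lmul (R.e gh.2) B')) < 1 / (n + 1) := by
    intro n
    apply exists_lt_of_ciInf_lt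
    rw [h0]
    positivity
  choose gh hgh using key
  refine ⟨fun n => (gh n).1⁻¹ * (gh n).2, ?_, ?_⟩
  · rw [tendsto_iff_dist_tendsto_zero]
    apply squeeze_zero (fun n => dist_nonneg) (g := fun n : ℕ => 1 / (n + 1 : ℝ))
    · intro n
      have : R.lmul (R.e ((gh n).1)) (R.lmul (R.e ((gh n).1⁻¹ * (gh n).2)) A')
          = R.lmul (R.e ((gh n).2)) A' := by
        rw [← R.lmul_assoc, R.lmul_e, mul_inv_cancel_left]
      calc dist (R.lmul (R.e ((gh n).1⁻¹ * (gh n).2)) A') A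
          = dist (R.lmul (R.e ((gh n).2)) A') (R.lmul (R.e ((gh n).1)) A) := by
            rw [← aux_dist_lmul R.toLeftCompletion ((gh n).1), this]
        _ ≤ 1 / (n + 1) := by
            rw [dist_comm]
            exact (le_max_left _ _).trans (hgh n).le
    · exact tendsto_one_div_add_atTop_nhds_zero_nat
  · rw [tendsto_iff_dist_tendsto_zero]
    apply squeeze_zero (fun n => dist_nonneg) (g := fun n : ℕ => 1 / (n + 1 : ℝ))
    · intro n
      have : R.lmul (R.e ((gh n).1)) (R.lmul (R.e ((gh n).1⁻¹ * (gh n).2)) B')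
          = R.lmul (R.e ((gh n).2)) B' := by
        rw [← R.lmul_assoc, R.lmul_e, mul_inv_cancel_left]
      calc dist (R.lmul (R.e ((gh n).1⁻¹ * (gh n).2)) B') B
          = dist (R.lmul (R.e ((gh n).2)) B') (R.lmul (R.e ((gh n).1)) B) := by
            rw [← aux_dist_lmul R.toLeftCompletion ((gh n).1), this]
        _ ≤ 1 / (n + 1) := by
            rw [dist_comm]
            exact (le_max_right _ _).trans (hgh n).le
    · exact tendsto_one_div_add_atTop_nhds_zero_nat

lemma aux_eq_lmul_of_pair {c Z Z' : R.L} (h : R.pair c Z = R.pair (R.e 1) Z') :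
    Z = R.lmul c Z' := by
  obtain ⟨k, h1, h2⟩ := aux_pair_eq_seq R h
  have h1' : Tendsto (fun n => R.e (k n)) atTop (𝓝 c) := by
    have : ∀ n, R.lmul (R.e (k n)) (R.e 1) = R.e (k n) := fun n => by
      rw [R.lmul_e, mul_one]
    simpa [this] using h1
  have h3 : Tendsto (fun n => R.lmul (R.e (k n)) Z') atTop (𝓝 (R.lmul c Z')) :=
    (R.cont_lmul.tendsto (c, Z')).comp (h1'.prodMk_nhds tendsto_const_nhds)
  exact tendsto_nhds_unique h2 h3

end Aux2

section Aux3
variable {G : Type*} [Group G] [TopologicalSpace G] (R : RoelckeCompletion G)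

lemma aux_compactM (hG : RoelckePrecompact G) : CompactSpace R.M := by
  haveI := R.completeM
  rw [← isCompact_univ_iff, isCompact_iff_totallyBounded_isComplete]
  refine ⟨?_, completeSpace_iff_isComplete_univ.mp inferInstance⟩
  rw [Metric.totallyBounded_iff]
  intro ε hε
  set U : Set G := R.e ⁻¹' Metric.ball (R.e 1) (ε / 4) with hUdef
  have hU : U ∈ 𝓝 (1 : G) := by
    apply R.embed_e.continuous.continuousAt.preimage_mem_nhds
    exact Metric.ball_mem_nhds _ (by positivity)
  obtain ⟨F, hF, hFU⟩ := hG U hU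
  refine ⟨(fun f => R.pair (R.e 1) (R.e f)) '' F, hF.image _, ?_⟩
  intro m _
  obtain ⟨X, Y, hXY⟩ := R.pair_surj m
  obtain ⟨g, hg⟩ := R.dense_e.exists_dist_lt X (by positivity : (0:ℝ) < ε / 4)
  obtain ⟨h, hh⟩ := R.dense_e.exists_dist_lt Y (by positivity : (0:ℝ) < ε / 4)
  -- g⁻¹ * h ∈ U * F * U
  have hmem : g⁻¹ * h ∈ U * F * U := by rw [hFU]; trivial
  obtain ⟨pf, hpf, u', hu', hp⟩ := hmem
  obtain ⟨u, hu, f, hf, hq⟩ := hpf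
  -- m is close to pair (e 1) (e (g⁻¹ * h))
  have e1 : R.pair (R.e g) (R.e h) = R.pair (R.e 1) (R.e (g⁻¹ * h)) := by
    have := aux_pair_lmul_e R g (R.e 1) (R.e (g⁻¹ * h))
    rwa [R.lmul_e, R.lmul_e, mul_one, mul_inv_cancel_left] at this
  have d1 : dist m (R.pair (R.e 1) (R.e (g⁻¹ * h))) < ε / 4 := by
    rw [← e1, ← hXY]
    calc dist (R.pair X Y) (R.pair (R.e g) (R.e h))
        ≤ max (dist X (R.e g)) (dist Y (R.e h)) := aux_pair_lip R _ _ _ _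
      _ < ε / 4 := max_lt hg hh
  have d2 : dist (R.pair (R.e 1) (R.e (g⁻¹ * h))) (R.pair (R.e 1) (R.e f)) < ε / 4 := by
    have key := aux_dist_pair_le R (R.e 1) (R.e (g⁻¹ * h)) (R.e 1) (R.e f) 1 u
    rw [R.lmul_e, R.lmul_e, R.lmul_e, R.lmul_e, one_mul, one_mul, mul_one] at key
    have hgh : g⁻¹ * h = u * f * u' := by rw [← hq] at hp; exact hp.symm
    have t1 : dist (R.e 1) (R.e u) < ε / 4 := by
      rw [dist_comm]; exact hu
    have t2 : dist (R.e (g⁻¹ * h)) (R.e (u * f)) < ε / 4 := by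
      have heq : dist (R.e (u * f * u')) (R.e (u * f)) = dist (R.e u') (R.e 1) := by
        simpa [mul_one] using R.dist_left_invariant (u * f) u' 1
      rw [hgh, heq]
      exact hu'
    exact lt_of_le_of_lt key (max_lt t1 t2)
  rw [Set.mem_iUnion₂]
  refine ⟨R.pair (R.e 1) (R.e f), Set.mem_image_of_mem _ hf, ?_⟩
  rw [Metric.mem_ball]
  calc dist m (R.pair (R.e 1) (R.e f))
      ≤ dist m (R.pair (R.e 1) (R.e (g⁻¹ * h))) +
        dist (R.pair (R.e 1) (R.e (g⁻¹ * h))) (R.pair (R.e 1) (R.e f)) := dist_triangle _ _ _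
    _ < ε / 4 + ε / 4 := add_lt_add d1 d2
    _ < ε := by linarith

end Aux3


/-- **Lemma 2.6.**  Let `G` be a Roelcke precompact Polish group.  For every
`p ∈ Ĝ_{L∧R}` and all `x, y ∈ Ĝ_L` such that `px = py`, there are `w, u, v ∈ Ĝ_L` such that
`w*u = w*v = p` and `uy = vx`. -/
theorem complex_amalgamation {G : Type*} [Group G] [TopologicalSpace G] [IsTopologicalGroup G]
    [PolishSpace G] (hG : RoelckePrecompact G)
    (R : RoelckeCompletion G) (p : R.M) (x y : R.L)
    (h : R.act p x = R.act p y) :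
    ∃ w u v : R.L, R.pair w u = p ∧ R.pair w v = p ∧ R.lmul u y = R.lmul v x := by
  obtain ⟨a, b, hab⟩ := R.pair_surj p
  have hxy : R.pair a (R.lmul b x) = R.pair a (R.lmul b y) := by
    rw [← R.act_pair, ← R.act_pair, hab, h]
  obtain ⟨k, hk1, hk2⟩ := aux_pair_eq_seq R hxy
  -- hk1 : lmul (e (k n)) a → a ; hk2 : lmul (e (k n)) (lmul b x) → lmul b y
  haveI := aux_compactM R hG
  obtain ⟨η, -, φ, hφ, hconv⟩ := IsCompact.tendsto_subseq (x := fun n => R.pair (R.e 1) (R.e (k n)))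
    isCompact_univ (fun n => Set.mem_univ _)
  obtain ⟨c, d, hcd⟩ := R.pair_surj η
  -- limits of act along the subsequence
  have key : ∀ z w : R.L, Tendsto (fun n => R.lmul (R.e (k n)) z) atTop (𝓝 w) →
      R.pair c (R.lmul d z) = R.pair (R.e 1) w := by
    intro z w hz
    have t1 : Tendsto (fun n => R.act (R.pair (R.e 1) (R.e (k (φ n)))) z) atTop
        (𝓝 (R.act η z)) :=
      (R.cont_act.tendsto (η, z)).comp (hconv.prodMk_nhds tendsto_const_nhds)
    have t2 : (fun n => R.act (R.pair (R.e 1) (R.e (k (φ n)))) z)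
        = fun n => R.pair (R.e 1) (R.lmul (R.e (k (φ n))) z) := by
      funext n; rw [R.act_pair]
    have t3 : Tendsto (fun n => R.pair (R.e 1) (R.lmul (R.e (k (φ n))) z)) atTop
        (𝓝 (R.pair (R.e 1) w)) :=
      ((aux_cont_pair R).tendsto (R.e 1, w)).comp
        (tendsto_const_nhds.prodMk_nhds (hz.comp hφ.tendsto_atTop))
    rw [t2] at t1
    have : R.act η z = R.pair (R.e 1) w := tendsto_nhds_unique t1 t3
    rw [← this, ← hcd, R.act_pair]
  have h1 : R.pair c (R.lmul d a) = R.pair (R.e 1) a := key a a hk1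
  have h2 : R.pair c (R.lmul d (R.lmul b y)) = R.pair (R.e 1) (R.lmul b x) :=
    key (R.lmul b y) (R.lmul b x) hk2
  have e1 : R.lmul d a = R.lmul c a := aux_eq_lmul_of_pair R h1
  have e2 : R.lmul d (R.lmul b y) = R.lmul c (R.lmul b x) := aux_eq_lmul_of_pair R h2
  refine ⟨R.lmul c a, R.lmul d b, R.lmul c b, ?_, ?_, ?_⟩
  · rw [← e1, aux_pair_lmul, hab]
  · rw [aux_pair_lmul, hab]
  · rw [R.lmul_assoc, R.lmul_assoc, ← e2]
end

section
/- Let G be a Roelcke precompact Polish group. Then every idempotent e ∈ W(G) (i.e., every e with ee = e) satisfies e* = e. -/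
open Filter Topology Set Pointwise

/-- Left uniform continuity of a function on a topological group. -/
def LeftUC {G : Type*} [Group G] [TopologicalSpace G] (f : G → ℂ) : Prop :=
  ∀ ε : ℝ, 0 < ε → ∃ U ∈ 𝓝 (1 : G), ∀ g h : G, g⁻¹ * h ∈ U → ‖f g - f h‖ < ε

/-- Right uniform continuity of a function on a topological group. -/
def RightUC {G : Type*} [Group G] [TopologicalSpace G] (f : G → ℂ) : Prop :=
  ∀ ε : ℝ, 0 < ε → ∃ U ∈ 𝓝 (1 : G), ∀ g h : G, h * g⁻¹ ∈ U → ‖f g - f h‖ < ε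

/-- The weak topology on a normed space: the initial topology induced by all continuous
linear functionals. -/
noncomputable def weakTopology (E : Type*) [NormedAddCommGroup E] [NormedSpace ℂ E] :
    TopologicalSpace E :=
  TopologicalSpace.induced (fun (x : E) (φ : E →L[ℂ] ℂ) => φ x) Pi.topologicalSpace

/-- A function on a topological group is weakly almost periodic if it is (bounded, continuous
and) both left and right uniformly continuous, and its orbit under left translations is
contained in a weakly compact subset of the Banach space of bounded continuous functions. -/
def IsWAP {G : Type*} [Group G] [TopologicalSpace G] (f : G → ℂ) : Prop :=
  LeftUC f ∧ RightUC f ∧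
    ∃ S : Set (BoundedContinuousFunction G ℂ),
      @IsCompact _ (weakTopology _) S ∧ ∀ g : G, ∃ F ∈ S, ∀ x : G, F x = f (g * x)

/-- "R(G) = W(G)": every bounded Roelcke uniformly continuous function (i.e. bounded function
which is both left and right uniformly continuous) is weakly almost periodic. -/
def EveryRUCIsWAP (G : Type*) [Group G] [TopologicalSpace G] : Prop :=
  ∀ f : G → ℂ, LeftUC f → RightUC f → (∃ C : ℝ, ∀ g, ‖f g‖ ≤ C) → IsWAP f

/-- An abstract axiomatization of the WAP compactification `W(G)` of a topological group:
a compact Hausdorff semitopological ∗-semigroup into which `G` maps densely, such that the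
continuous functions on it pull back exactly to the weakly almost periodic functions on `G`.
These properties determine `W(G)` uniquely up to canonical isomorphism. -/
structure WAPCompactification (G : Type*) [Group G] [TopologicalSpace G] where
  W : Type*
  [topW : TopologicalSpace W]
  compact : CompactSpace W
  t2 : T2Space W
  mul : W → W → W
  mul_assoc : ∀ p q r, mul (mul p q) r = mul p (mul q r)
  cont_mul_left : ∀ p, Continuous fun q => mul p q
  cont_mul_right : ∀ p, Continuous fun q => mul q p
  star : W → W
  cont_star : Continuous star
  star_star : ∀ p, star (star p) = p
  star_mul : ∀ p q, star (mul p q) = mul (star q) (star p)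
  ι : G → W
  cont_ι : Continuous ι
  ι_mul : ∀ g h : G, ι (g * h) = mul (ι g) (ι h)
  ι_inv : ∀ g : G, ι g⁻¹ = star (ι g)
  dense_ι : Dense (Set.range ι)
  wap_iff : ∀ f : G → ℂ, IsWAP f ↔ ∃ F : W → ℂ, Continuous F ∧ ∀ g, f g = F (ι g)

attribute [instance] WAPCompactification.topW

namespace WAPCompactification

variable {G : Type*} [Group G] [TopologicalSpace G] (WC : WAPCompactification G)

/-- The left ideal `W(G)·p`. -/
def Wp (p : WC.W) : Set WC.W := Set.range fun s => WC.mul s p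

/-- Green's preorder `p ≤_L q`, i.e. `W(G)p ⊆ W(G)q`. -/
def leL (p q : WC.W) : Prop := WC.Wp p ⊆ WC.Wp q

/-- Green's equivalence relation `p ≡_L q`. -/
def eqL (p q : WC.W) : Prop := WC.leL p q ∧ WC.leL q p

/-- A central idempotent of `W(G)`. -/
def CentralIdem (e : WC.W) : Prop :=
  WC.mul e e = e ∧ ∀ w, WC.mul e w = WC.mul w e

end WAPCompactification

section Aux

variable {G : Type*} [Group G] [TopologicalSpace G] (WC : WAPCompactification G)

/-- `ι 1` is a left identity of `W(G)`. -/
theorem WAP_one_mul (q : WC.W) : WC.mul (WC.ι 1) q = q := by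
  haveI := WC.t2
  have h : (fun q => WC.mul (WC.ι 1) q) = (id : WC.W → WC.W) := by
    apply (WC.cont_mul_left _).ext_on WC.dense_ι continuous_id
    rintro x ⟨g, rfl⟩
    show WC.mul (WC.ι 1) (WC.ι g) = WC.ι g
    rw [← WC.ι_mul, one_mul]
  exact congrFun h q

/-- Galvin–Glazer style construction: given an "idempotency witness" open set `V ∋ e`
which absorbs right multiplication by `e`, we can find a sequence all of whose
forward difference products land (via `ι`) inside `V`. -/
theorem WAP_exists_seq (e : WC.W) (V : Set WC.W) (hVo : IsOpen V) (heV : e ∈ V)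
    (hstep : ∀ q ∈ V, WC.mul q e ∈ V) :
    ∃ b : ℕ → G, ∀ m n : ℕ, m < n → WC.ι ((b m)⁻¹ * b n) ∈ V := by
  classical
  haveI := WC.t2
  -- the one-step extension
  have key : ∀ l : List G, (∀ m, m < l.length → WC.ι ((l.drop m).prod) ∈ V) →
      ∃ c : G, ∀ m, m < l.length + 1 → WC.ι (((l ++ [c]).drop m).prod) ∈ V := by
    intro l hl
    have hOopen : IsOpen (⋂ m : Fin (l.length + 1),
        (fun w => WC.mul (WC.ι ((l.drop m).prod)) w) ⁻¹' V) :=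
      isOpen_iInter_of_finite fun m => hVo.preimage (WC.cont_mul_left _)
    have heO : e ∈ ⋂ m : Fin (l.length + 1),
        (fun w => WC.mul (WC.ι ((l.drop m).prod)) w) ⁻¹' V := by
      refine Set.mem_iInter.2 fun m => ?_
      rcases lt_or_eq_of_le (Nat.lt_succ_iff.mp m.isLt) with hm | hm
      · exact hstep _ (hl m hm)
      · show WC.mul (WC.ι ((l.drop (m : ℕ)).prod)) e ∈ V
        rw [hm, List.drop_length]
        show WC.mul (WC.ι 1) e ∈ V
        rw [WAP_one_mul]
        exact heV
    obtain ⟨w, ⟨c, rfl⟩, hw⟩ := WC.dense_ι.exists_mem_open hOopen ⟨e, heO⟩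
    refine ⟨c, fun m hm => ?_⟩
    have hm' : m ≤ l.length := Nat.lt_succ_iff.mp hm
    rw [List.drop_append_of_le_length hm', List.prod_append, List.prod_singleton, WC.ι_mul]
    exact Set.mem_iInter.1 hw ⟨m, hm⟩
  -- iterate
  let step : List G → List G := fun l =>
    if h : ∀ m, m < l.length → WC.ι ((l.drop m).prod) ∈ V then
      l ++ [Classical.choose (key l h)] else l
  let L : ℕ → List G := fun n => step^[n] []
  have hLsucc : ∀ n, L (n + 1) = step (L n) := fun n =>
    Function.iterate_succ_apply' step n []
  have hInv : ∀ n, ∀ m, m < (L n).length → WC.ι (((L n).drop m).prod) ∈ V := by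
    intro n
    induction n with
    | zero => intro m hm; simp only [L, Function.iterate_zero, id_eq, List.length_nil] at hm; omega
    | succ n ih =>
        rw [hLsucc n]
        show ∀ m, m < (step (L n)).length → WC.ι (((step (L n)).drop m).prod) ∈ V
        rw [show step (L n) = L n ++ [Classical.choose (key (L n) ih)] from dif_pos ih]
        have := Classical.choose_spec (key (L n) ih)
        intro m hm
        refine this m ?_
        simpa using hm
  have hstepInv : ∀ n, step (L n) = L n ++ [Classical.choose (key (L n) (hInv n))] :=
    fun n => dif_pos (hInv n)
  have hlen : ∀ n, (L n).length = n := by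
    intro n
    induction n with
    | zero => rfl
    | succ n ih => rw [hLsucc n, hstepInv n]; simp [ih]
  have htake : ∀ m n, m ≤ n → (L n).take m = L m := by
    intro m n h
    induction n with
    | zero => interval_cases m; rfl
    | succ n ih =>
        rcases lt_or_eq_of_le h with h' | h'
        · have hm : m ≤ n := Nat.lt_succ_iff.mp h'
          rw [hLsucc n, hstepInv n, List.take_append_of_le_length (by rw [hlen]; omega)]
          exact ih hm
        · rw [h']
          exact List.take_of_length_le (by rw [hlen])
  refine ⟨fun n => (L n).prod, fun m n hmn => ?_⟩
  have h2 := List.prod_take_mul_prod_drop (L n) m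
  rw [htake m n hmn.le] at h2
  have : ((L m).prod)⁻¹ * (L n).prod = ((L n).drop m).prod := by
    rw [← h2, inv_mul_cancel_left]
  rw [this]
  exact hInv n m (by rw [hlen]; exact hmn)

end Aux

/-- **Lemma 3.4.**  Let `G` be a Roelcke precompact Polish group.  Every idempotent
`e ∈ W(G)` satisfies `e* = e`. -/
theorem idempotent_star_self {G : Type*} [Group G] [TopologicalSpace G] [IsTopologicalGroup G]
    [PolishSpace G] (hG : RoelckePrecompact G)
    (WC : WAPCompactification G) (e : WC.W) (he : WC.mul e e = e) :
    WC.star e = e := by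
  classical
  haveI := WC.t2
  haveI := WC.compact
  -- It suffices that every continuous function takes the same value at `e` and `e*`.
  have key : ∀ f : WC.W → ℂ, Continuous f → f (WC.star e) = f e := by
    intro f hf
    have hδ : ∀ δ : ℝ, 0 < δ → dist (f (WC.star e)) (f e) ≤ 2 * δ := by
      intro δ hδpos
      -- the idempotency witness open set
      have hA : IsOpen {q : WC.W | dist (f q) (f e) < δ} :=
        isOpen_lt (hf.dist continuous_const) continuous_const
      have hB : IsOpen {q : WC.W | dist (f (WC.star q)) (f (WC.star e)) < δ} :=
        isOpen_lt ((hf.comp WC.cont_star).dist continuous_const) continuous_const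
      set V0 : Set WC.W :=
        {q | dist (f q) (f e) < δ} ∩ {q | dist (f (WC.star q)) (f (WC.star e)) < δ} with hV0
      have hV0o : IsOpen V0 := hA.inter hB
      have heV0 : e ∈ V0 := ⟨by simpa using hδpos, by simpa using hδpos⟩
      set V : Set WC.W := V0 ∩ (fun q => WC.mul q e) ⁻¹' V0 with hV
      have hVo : IsOpen V := hV0o.inter (hV0o.preimage (WC.cont_mul_right e))
      have heV : e ∈ V := ⟨heV0, by show WC.mul e e ∈ V0; rw [he]; exact heV0⟩
      have hstep : ∀ q ∈ V, WC.mul q e ∈ V := by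
        intro q hq
        refine ⟨hq.2, ?_⟩
        show WC.mul (WC.mul q e) e ∈ V0
        rw [WC.mul_assoc, he]
        exact hq.2
      obtain ⟨b, hb⟩ := WAP_exists_seq WC e V hVo heV hstep
      -- the WAP structure of the restriction of `f`
      have hwap : IsWAP (fun g : G => f (WC.ι g)) := (WC.wap_iff _).2 ⟨f, hf, fun _ => rfl⟩
      obtain ⟨-, -, S, hScomp, hSmem⟩ := hwap
      choose Fx hFxS hFx using fun m : ℕ => hSmem ((b m)⁻¹)
      -- the ultrafilter and the limit functional
      set 𝒱 : Ultrafilter ℕ := Filter.hyperfilter ℕ with h𝒱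
      have hcof : ∀ s : Set ℕ, s ∈ (Filter.cofinite : Filter ℕ) → s ∈ (𝒱 : Filter ℕ) :=
        fun s hs => Filter.hyperfilter_le_cofinite hs
      have hgt : ∀ m : ℕ, {n : ℕ | m < n} ∈ (𝒱 : Filter ℕ) := by
        intro m
        refine hcof _ ?_
        rw [Filter.mem_cofinite]
        have : {n : ℕ | m < n}ᶜ = Set.Iic m := by ext n; simp [not_lt, Set.mem_Iic]
        rw [this]
        exact Set.finite_Iic m
      have exlim : ∀ h : BoundedContinuousFunction G ℂ,
          ∃ z : ℂ, Filter.Tendsto (fun n => h (b n)) (𝒱 : Filter ℕ) (𝓝 z) := by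
        intro h
        obtain ⟨z, -, hz⟩ := (isCompact_closedBall (0 : ℂ) ‖h‖).ultrafilter_le_nhds
          (𝒱.map fun n => h (b n)) (by
            rw [Filter.le_principal_iff, Ultrafilter.mem_coe, Ultrafilter.mem_map]
            refine Filter.univ_mem' fun n => ?_
            simpa [Metric.mem_closedBall, dist_zero_right] using h.norm_coe_le_norm (b n))
        refine ⟨z, ?_⟩
        show Filter.map (fun n => h (b n)) (𝒱 : Filter ℕ) ≤ 𝓝 z
        rw [← Ultrafilter.coe_map]
        exact hz
      choose Λ₀ hΛ₀ using exlim
      have hadd : ∀ h₁ h₂, Λ₀ (h₁ + h₂) = Λ₀ h₁ + Λ₀ h₂ := by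
        intro h₁ h₂
        refine tendsto_nhds_unique (hΛ₀ (h₁ + h₂)) ?_
        simpa using (hΛ₀ h₁).add (hΛ₀ h₂)
      have hsmul : ∀ (c : ℂ) h, Λ₀ (c • h) = c • Λ₀ h := by
        intro c h
        refine tendsto_nhds_unique (hΛ₀ (c • h)) ?_
        simpa using (hΛ₀ h).const_smul c
      set Λ : BoundedContinuousFunction G ℂ →L[ℂ] ℂ :=
        LinearMap.mkContinuous ⟨⟨Λ₀, hadd⟩, hsmul⟩ 1 (fun h => by
          rw [one_mul]
          exact le_of_tendsto (hΛ₀ h).norm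
            (Filter.Eventually.of_forall fun n => h.norm_coe_le_norm (b n))) with hΛdef
      have hΛapp : ∀ h, Λ h = Λ₀ h := fun _ => rfl
      -- every continuous linear functional is weakly continuous
      have hwcont : ∀ T : BoundedContinuousFunction G ℂ →L[ℂ] ℂ,
          @Continuous (BoundedContinuousFunction G ℂ) ℂ
            (weakTopology (BoundedContinuousFunction G ℂ)) _ (fun h => T h) := by
        intro T
        have hj : @Continuous (BoundedContinuousFunction G ℂ)
            ((BoundedContinuousFunction G ℂ →L[ℂ] ℂ) → ℂ)
            (weakTopology (BoundedContinuousFunction G ℂ)) Pi.topologicalSpace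
            (fun x φ => φ x) := continuous_induced_dom
        have hT : Continuous fun p : (BoundedContinuousFunction G ℂ →L[ℂ] ℂ) → ℂ => p T :=
          continuous_apply T
        exact @Continuous.comp (BoundedContinuousFunction G ℂ)
          ((BoundedContinuousFunction G ℂ →L[ℂ] ℂ) → ℂ) ℂ
          (weakTopology (BoundedContinuousFunction G ℂ)) Pi.topologicalSpace _
          _ _ hT hj
      -- the weak limit along the ultrafilter of the translates
      obtain ⟨ψ, hψS, hψ⟩ := @IsCompact.ultrafilter_le_nhds
          (BoundedContinuousFunction G ℂ) (weakTopology _) _ hScomp (𝒱.map Fx) (by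
        rw [Filter.le_principal_iff, Ultrafilter.mem_coe, Ultrafilter.mem_map]
        exact Filter.univ_mem' fun m => hFxS m)
      have hψt : Filter.Tendsto Fx (𝒱 : Filter ℕ) (@nhds _ (weakTopology _) ψ) := by
        show Filter.map Fx (𝒱 : Filter ℕ) ≤ @nhds _ (weakTopology _) ψ
        rw [← Ultrafilter.coe_map]
        exact hψ
      -- estimate 1 : Λ₀ (Fx m) is close to f e
      have hA1 : ∀ m, dist (Λ₀ (Fx m)) (f e) ≤ δ := by
        intro m
        refine le_of_tendsto ((hΛ₀ (Fx m)).dist tendsto_const_nhds) ?_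
        filter_upwards [hgt m] with n hn
        rw [hFx m (b n)]
        exact (hb m n hn).1.1.le
      -- estimate 2 : Λ₀ ψ is close to f e
      have hA2 : dist (Λ₀ ψ) (f e) ≤ δ := by
        have ht : Filter.Tendsto (fun m => Λ (Fx m)) (𝒱 : Filter ℕ) (𝓝 (Λ ψ)) :=
          Filter.Tendsto.comp
            (@Continuous.tendsto _ _ (weakTopology _) _ _ (hwcont Λ) ψ) hψt
        rw [hΛapp] at ht
        refine le_of_tendsto (ht.dist tendsto_const_nhds) ?_
        exact Filter.Eventually.of_forall fun m => by
          rw [hΛapp]; exact hA1 m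
      -- estimate 3 : ψ (b n) is close to f e*
      have hA3 : ∀ n, dist (ψ (b n)) (f (WC.star e)) ≤ δ := by
        intro n
        have hevc : @Continuous (BoundedContinuousFunction G ℂ) ℂ
            (weakTopology (BoundedContinuousFunction G ℂ)) _
            (fun h : BoundedContinuousFunction G ℂ => h (b n)) := by
          have h1 := hwcont (BoundedContinuousFunction.evalCLM ℂ (b n))
          simp only [BoundedContinuousFunction.evalCLM_apply] at h1
          exact h1
        have ht : Filter.Tendsto (fun m => Fx m (b n)) (𝒱 : Filter ℕ) (𝓝 (ψ (b n))) :=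
          Filter.Tendsto.comp
            (@Continuous.tendsto _ _ (weakTopology _) _ _ hevc ψ) hψt
        refine le_of_tendsto (ht.dist tendsto_const_nhds) ?_
        filter_upwards [hgt n] with m hm
        rw [hFx m (b n)]
        have hstareq : WC.star (WC.ι ((b n)⁻¹ * b m)) = WC.ι ((b m)⁻¹ * b n) := by
          rw [← WC.ι_inv, mul_inv_rev, inv_inv]
        have hq : dist (f (WC.star (WC.ι ((b n)⁻¹ * b m)))) (f (WC.star e)) < δ :=
          (hb n m hm).1.2
        rw [hstareq] at hq
        show dist (f (WC.ι ((b m)⁻¹ * b n))) (f (WC.star e)) ≤ δ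
        exact hq.le
      -- estimate 4 : Λ₀ ψ is close to f e*
      have hA4 : dist (Λ₀ ψ) (f (WC.star e)) ≤ δ :=
        le_of_tendsto ((hΛ₀ ψ).dist tendsto_const_nhds)
          (Filter.Eventually.of_forall fun n => hA3 n)
      calc dist (f (WC.star e)) (f e)
          ≤ dist (f (WC.star e)) (Λ₀ ψ) + dist (Λ₀ ψ) (f e) := dist_triangle _ _ _
        _ ≤ δ + δ := add_le_add (by rw [dist_comm]; exact hA4) hA2
        _ = 2 * δ := by ring
    by_contra hne
    have hpos : 0 < dist (f (WC.star e)) (f e) := dist_pos.2 hne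
    have := hδ (dist (f (WC.star e)) (f e) / 4) (by positivity)
    linarith
  -- conclude using Urysohn's lemma
  by_contra hne
  obtain ⟨u, hu0, hu1, -⟩ := exists_continuous_zero_one_of_isClosed
    (isClosed_singleton : IsClosed {WC.star e}) (isClosed_singleton : IsClosed {e})
    (by simpa [Set.disjoint_singleton] using hne)
  have h := key (fun w => ((u w : ℝ) : ℂ)) (Complex.continuous_ofReal.comp u.continuous)
  have h0 : u (WC.star e) = 0 := hu0 (Set.mem_singleton _)
  have h1 : u e = 1 := hu1 (Set.mem_singleton _)
  simp only [h0, h1] at h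
  norm_num at h
end

section
/- Let G be a Roelcke precompact Polish group such that every bounded Roelcke uniformly continuous function on G is weakly almost periodic. Then every quotient G' of G is Roelcke precompact and every bounded Roelcke uniformly continuous function on G' is weakly almost periodic; in particular, weakly almost periodic functions on G' separate points from closed sets, so G' is a WAP quotient of G. -/
set_option maxHeartbeats 1000000


open Filter Topology Set Pointwise Uniformity

lemma exists_compatible_dist (H : Type*) [Group H] [TopologicalSpace H] [IsTopologicalGroup H]
    [PolishSpace H] :
    ∃ d : H → H → ℝ, (∀ a, d a a = 0) ∧ (∀ a b, 0 ≤ d a b) ∧ (∀ a b, d a b = d b a) ∧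
      (∀ a b c, d a c ≤ d a b + d b c) ∧
      (∀ ε : ℝ, 0 < ε → ∃ W ∈ 𝓝 (1:H), ∀ p : H × H, p.2 / p.1 ∈ W → d p.1 p.2 < ε) ∧
      (∀ W ∈ 𝓝 (1:H), ∃ ε : ℝ, 0 < ε ∧ ∀ p : H × H, d p.1 p.2 < ε → p.2 / p.1 ∈ W) := by
  letI u : UniformSpace H := IsTopologicalGroup.rightUniformSpace H
  haveI cg : IsCountablyGenerated (@uniformity H u) :=
    inferInstanceAs (IsCountablyGenerated (comap (fun p : H × H => p.2 * p.1⁻¹) (𝓝 1)))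
  obtain ⟨I, hI⟩ := UniformSpace.metrizable_uniformity H
  have huni : @uniformity H I.toUniformSpace = comap (fun p : H × H => p.2 / p.1) (𝓝 (1:H)) := by
    rw [hI]; show comap (fun p : H × H => p.2 * p.1⁻¹) (𝓝 1) = _; simp only [div_eq_mul_inv]
  refine ⟨fun a b => @dist H I.toDist a b, fun a => @dist_self H I a, fun a b => @dist_nonneg H I a b,
    fun a b => @dist_comm H I a b, fun a b c => @dist_triangle H I a b c, ?_, ?_⟩
  · intro ε hε
    have h1 : {p : H × H | @dist H I.toDist p.1 p.2 < ε} ∈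
        comap (fun p : H × H => p.2 / p.1) (𝓝 (1:H)) := by
      rw [← huni]; exact @Metric.dist_mem_uniformity H I ε hε
    obtain ⟨W, hW, hsub⟩ := mem_comap.1 h1
    exact ⟨W, hW, fun p hp => hsub hp⟩
  · intro W hW
    have h1 : (fun p : H × H => p.2 / p.1) ⁻¹' W ∈ @uniformity H I.toUniformSpace := by
      rw [huni]; exact preimage_mem_comap hW
    obtain ⟨ε, hε, hsub⟩ := (@Metric.mem_uniformity_dist H I _).1 h1
    exact ⟨ε, hε, fun p hp => hsub hp⟩


lemma min_one_subadd {x y : ℝ} (hx : 0 ≤ x) (hy : 0 ≤ y) :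
    min 1 (x + y) ≤ min 1 x + min 1 y := by
  rcases le_or_gt 1 x with h | h
  · have : min 1 x = 1 := min_eq_left h
    have h2 : 0 ≤ min 1 y := le_min zero_le_one hy
    calc min 1 (x+y) ≤ 1 := min_le_left _ _
    _ ≤ min 1 x + min 1 y := by rw [this]; linarith
  · rcases le_or_gt 1 y with h' | h'
    · have : min 1 y = 1 := min_eq_left h'
      have h2 : 0 ≤ min 1 x := le_min zero_le_one hx
      calc min 1 (x+y) ≤ 1 := min_le_left _ _
      _ ≤ min 1 x + min 1 y := by rw [this]; linarith
    · rw [min_eq_right h.le, min_eq_right h'.le]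
      exact min_le_right _ _

/-- A bounded "length function" on a Polish group. -/
lemma exists_length (H : Type*) [Group H] [TopologicalSpace H] [IsTopologicalGroup H]
    [PolishSpace H] :
    ∃ ℓ : H → ℝ, (∀ a, 0 ≤ ℓ a) ∧ ℓ 1 = 0 ∧ (∀ a b, ℓ (a * b) ≤ ℓ a + ℓ b) ∧
      (∀ W ∈ 𝓝 (1:H), ∃ ε : ℝ, 0 < ε ∧ ∀ a, ℓ a < ε → a ∈ W) ∧
      (∀ ε : ℝ, 0 < ε → ∃ U ∈ 𝓝 (1:H), ∀ a ∈ U, ℓ a < ε) := by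
  obtain ⟨d, hd0, hdnn, hdsymm, hdtri, hfine, hcoarse⟩ := exists_compatible_dist H
  set ℓ : H → ℝ := fun a => ⨆ g : H, min 1 (d (a * g) g) with hℓ
  have hbdd : ∀ a : H, BddAbove (Set.range fun g => min 1 (d (a * g) g)) := by
    intro a
    exact ⟨1, by rintro x ⟨g, rfl⟩; exact min_le_left _ _⟩
  have hterm_nn : ∀ a g : H, 0 ≤ min 1 (d (a * g) g) := fun a g =>
    le_min zero_le_one (hdnn _ _)
  have hnn : ∀ a, 0 ≤ ℓ a := fun a => Real.iSup_nonneg (hterm_nn a)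
  have hle : ∀ a g, min 1 (d (a * g) g) ≤ ℓ a := fun a g => le_ciSup (hbdd a) g
  refine ⟨ℓ, hnn, ?_, ?_, ?_, ?_⟩
  · have h1 : ℓ 1 ≤ 0 := ciSup_le fun g => by simp [hd0]
    exact le_antisymm h1 (hnn 1)
  · intro a b
    refine ciSup_le fun g => ?_
    calc min 1 (d (a * b * g) g) ≤ min 1 (d (a * b * g) (b * g) + d (b * g) g) :=
          min_le_min le_rfl (hdtri _ _ _)
    _ ≤ min 1 (d (a * b * g) (b * g)) + min 1 (d (b * g) g) :=
          min_one_subadd (hdnn _ _) (hdnn _ _)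
    _ ≤ ℓ a + ℓ b := by
          have h1 : min 1 (d (a * b * g) (b * g)) ≤ ℓ a := by
            have := hle a (b * g); rwa [← mul_assoc] at this
          exact add_le_add h1 (hle b g)
  · intro W hW
    obtain ⟨ε, hε, hsub⟩ := hcoarse W hW
    refine ⟨min ε 1, lt_min hε one_pos, fun a ha => ?_⟩
    have h1 : min 1 (d (a * 1) 1) < min ε 1 := lt_of_le_of_lt (hle a 1) ha
    have h2 : d (a * 1) 1 < ε := by
      rcases le_or_gt 1 (d (a * 1) 1) with h | h
      · exfalso; rw [min_eq_left h] at h1; exact absurd h1 (not_lt.2 (min_le_right _ _))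
      · rw [min_eq_right h.le] at h1
        exact lt_of_lt_of_le h1 (min_le_left _ _)
    have := hsub (1, a) (by simpa [hdsymm, mul_one] using h2)
    simpa using this
  · intro ε hε
    obtain ⟨W, hW, hsub⟩ := hfine (ε / 2) (by linarith)
    refine ⟨W, hW, fun a ha => ?_⟩
    have h1 : ℓ a ≤ ε / 2 := by
      refine ciSup_le fun g => ?_
      have : d g (a * g) < ε / 2 := hsub (g, a * g) (by simpa using ha)
      have h2 : d (a * g) g < ε / 2 := by rwa [hdsymm]
      exact le_trans (min_le_right _ _) h2.le
    linarith


lemma exists_separating_ruc {H : Type*} [Group H] [TopologicalSpace H] [IsTopologicalGroup H]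
    [PolishSpace H] (A : Set H) (x : H) (hA : IsClosed A) (hx : x ∉ A) :
    ∃ f : H → ℂ, LeftUC f ∧ RightUC f ∧ (∃ C : ℝ, ∀ g, ‖f g‖ ≤ C) ∧ f x = 1 ∧
      ∀ a ∈ A, f a = 0 := by
  obtain ⟨ℓ, hℓnn, hℓ1, hℓadd, hcoarse, hfine⟩ := exists_length H
  have hcont : Continuous fun p : H × H => p.1 * x * p.2 :=
    (continuous_fst.mul continuous_const).mul continuous_snd
  have hmem : (fun p : H × H => p.1 * x * p.2) ⁻¹' Aᶜ ∈ 𝓝 ((1:H), (1:H)) := by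
    apply hcont.continuousAt.preimage_mem_nhds
    simpa using hA.isOpen_compl.mem_nhds hx
  obtain ⟨V₁, hV₁, V₂, hV₂, hVsub⟩ := mem_nhds_prod_iff.1 hmem
  set V : Set H := V₁ ∩ V₂ with hV
  have hVnhds : V ∈ 𝓝 (1:H) := inter_mem hV₁ hV₂
  have hVx : ∀ a ∈ V, ∀ b ∈ V, a * x * b ∉ A := fun a ha b hb =>
    hVsub (Set.mk_mem_prod ha.1 hb.2)
  obtain ⟨ε, hε, hεV⟩ := hcoarse V hVnhds
  set Sg : H → Set ℝ := fun g => {c | ∃ a b : H, a * x * b = g ∧ c = ℓ a + ℓ b} with hSg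
  have hSne : ∀ g, (Sg g).Nonempty := fun g =>
    ⟨ℓ (g * x⁻¹) + ℓ 1, g * x⁻¹, 1, by group, rfl⟩
  have hSbdd : ∀ g, BddBelow (Sg g) := fun g =>
    ⟨0, by rintro c ⟨a, b, -, rfl⟩; exact add_nonneg (hℓnn a) (hℓnn b)⟩
  set ρ : H → ℝ := fun g => sInf (Sg g) with hρ
  have hρnn : ∀ g, 0 ≤ ρ g := fun g => le_csInf (hSne g)
    (by rintro c ⟨a, b, -, rfl⟩; exact add_nonneg (hℓnn a) (hℓnn b))
  have hρx : ρ x = 0 := by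
    have h1 : ρ x ≤ ℓ 1 + ℓ 1 := csInf_le (hSbdd x) ⟨1, 1, by group, rfl⟩
    rw [hℓ1] at h1; linarith [hρnn x]
  have hmulr : ∀ g k : H, ρ (g * k) ≤ ρ g + ℓ k := by
    intro g k
    have h0 : ρ (g * k) - ℓ k ≤ ρ g := by
      refine le_csInf (hSne g) ?_
      rintro c ⟨a, b, hab, rfl⟩
      have h1 : ρ (g * k) ≤ ℓ a + ℓ (b * k) :=
        csInf_le (hSbdd _) ⟨a, b * k, by rw [← hab]; group, rfl⟩
      have h2 := hℓadd b k
      linarith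
    linarith
  have hmull : ∀ g k : H, ρ (k * g) ≤ ρ g + ℓ k := by
    intro g k
    have h0 : ρ (k * g) - ℓ k ≤ ρ g := by
      refine le_csInf (hSne g) ?_
      rintro c ⟨a, b, hab, rfl⟩
      have h1 : ρ (k * g) ≤ ℓ (k * a) + ℓ b :=
        csInf_le (hSbdd _) ⟨k * a, b, by rw [← hab]; group, rfl⟩
      have h2 := hℓadd k a
      linarith
    linarith
  have hρA : ∀ g ∈ A, ε ≤ ρ g := by
    intro g hg
    refine le_csInf (hSne g) ?_
    rintro c ⟨a, b, hab, rfl⟩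
    by_contra hc
    push_neg at hc
    have ha : ℓ a < ε := by linarith [hℓnn b]
    have hb : ℓ b < ε := by linarith [hℓnn a]
    exact hVx a (hεV a ha) b (hεV b hb) (hab ▸ hg)
  set fr : H → ℝ := fun g => max 0 (1 - ρ g / ε) with hfr
  have hlip : ∀ g h : H, |fr g - fr h| ≤ |ρ g - ρ h| / ε := by
    intro g h
    rw [abs_sub_comm (fr g), abs_sub_comm (ρ g)]
    have h1 : |fr h - fr g| ≤ |(1 - ρ h / ε) - (1 - ρ g / ε)| := by
      rw [hfr]
      simp only [max_comm (0:ℝ)]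
      exact abs_max_sub_max_le_abs _ _ _
    have h2 : (1 - ρ h / ε) - (1 - ρ g / ε) = (ρ g - ρ h) / ε := by ring
    rw [h2, abs_div, abs_of_pos hε, abs_sub_comm (ρ g)] at h1
    exact h1
  have hnorm : ∀ g h : H, ‖((fr g : ℝ) : ℂ) - ((fr h : ℝ) : ℂ)‖ = |fr g - fr h| := by
    intro g h
    rw [← Complex.ofReal_sub, Complex.norm_real, Real.norm_eq_abs]
  refine ⟨fun g => ((fr g : ℝ) : ℂ), ?_, ?_, ?_, ?_, ?_⟩
  · -- LeftUC
    intro ε' hε'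
    obtain ⟨U₀, hU₀, hU₀ℓ⟩ := hfine (ε * ε' / 2) (by positivity)
    have hU₀inv : U₀⁻¹ ∈ 𝓝 (1:H) := by
      have h3 := (continuous_inv (G := H)).continuousAt (x := (1:H))
      rw [ContinuousAt, inv_one] at h3
      exact inv_mem_nhds_one H hU₀
    refine ⟨U₀ ∩ U₀⁻¹, inter_mem hU₀ hU₀inv, fun g h hgh => ?_⟩
    have hk1 : ℓ (g⁻¹ * h) < ε * ε' / 2 := hU₀ℓ _ hgh.1
    have hk2 : ℓ ((g⁻¹ * h)⁻¹) < ε * ε' / 2 := hU₀ℓ _ (Set.mem_inv.1 hgh.2)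
    have hb1 : ρ h ≤ ρ g + ℓ (g⁻¹ * h) := by
      have := hmulr g (g⁻¹ * h); rwa [mul_inv_cancel_left] at this
    have hb2 : ρ g ≤ ρ h + ℓ ((g⁻¹ * h)⁻¹) := by
      have := hmulr h (g⁻¹ * h)⁻¹
      rwa [show h * (g⁻¹ * h)⁻¹ = g by group] at this
    have habs : |ρ g - ρ h| < ε * ε' / 2 := by
      rw [abs_sub_lt_iff]; constructor <;> linarith
    rw [hnorm]
    calc |fr g - fr h| ≤ |ρ g - ρ h| / ε := hlip g h
    _ < ε' := by rw [div_lt_iff₀ hε]; nlinarith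
  · -- RightUC
    intro ε' hε'
    obtain ⟨U₀, hU₀, hU₀ℓ⟩ := hfine (ε * ε' / 2) (by positivity)
    have hU₀inv : U₀⁻¹ ∈ 𝓝 (1:H) := by
      have h3 := (continuous_inv (G := H)).continuousAt (x := (1:H))
      rw [ContinuousAt, inv_one] at h3
      exact inv_mem_nhds_one H hU₀
    refine ⟨U₀ ∩ U₀⁻¹, inter_mem hU₀ hU₀inv, fun g h hgh => ?_⟩
    have hk1 : ℓ (h * g⁻¹) < ε * ε' / 2 := hU₀ℓ _ hgh.1
    have hk2 : ℓ ((h * g⁻¹)⁻¹) < ε * ε' / 2 := hU₀ℓ _ (Set.mem_inv.1 hgh.2)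
    have hb1 : ρ h ≤ ρ g + ℓ (h * g⁻¹) := by
      have := hmull g (h * g⁻¹)
      rwa [inv_mul_cancel_right] at this
    have hb2 : ρ g ≤ ρ h + ℓ ((h * g⁻¹)⁻¹) := by
      have := hmull h (h * g⁻¹)⁻¹
      rwa [show (h * g⁻¹)⁻¹ * h = g by group] at this
    have habs : |ρ g - ρ h| < ε * ε' / 2 := by
      rw [abs_sub_lt_iff]; constructor <;> linarith
    rw [hnorm]
    calc |fr g - fr h| ≤ |ρ g - ρ h| / ε := hlip g h
    _ < ε' := by rw [div_lt_iff₀ hε]; nlinarith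
  · refine ⟨1, fun g => ?_⟩
    rw [Complex.norm_real, Real.norm_eq_abs, abs_le]
    constructor
    · have h4 : (0:ℝ) ≤ fr g := le_max_left _ _
      linarith
    · have h1 : 1 - ρ g / ε ≤ 1 := by
        have := div_nonneg (hρnn g) hε.le; linarith
      exact max_le zero_le_one h1
  · show ((fr x : ℝ) : ℂ) = 1
    rw [hfr]; simp [hρx]
  · intro a ha
    show ((fr a : ℝ) : ℂ) = 0
    have h1 : 1 - ρ a / ε ≤ 0 := by
      have h2 : 1 ≤ ρ a / ε := (one_le_div hε).2 (hρA a ha)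
      linarith
    rw [hfr]; simp [max_eq_left h1]


lemma roelcke_quotient {G : Type*} [Group G] [TopologicalSpace G] [IsTopologicalGroup G]
    {G' : Type*} [Group G'] [TopologicalSpace G'] [IsTopologicalGroup G']
    (hG : RoelckePrecompact G) (π : G →* G') (hπ : Continuous π)
    (hdense : DenseRange π) : RoelckePrecompact G' := by
  intro U hU
  obtain ⟨V₀, hV₀open, hV₀1, hV₀mul⟩ := exists_open_nhds_one_mul_subset hU
  set V : Set G' := V₀ ∩ V₀⁻¹ with hVdef
  have hVopen : IsOpen V := hV₀open.inter hV₀open.inv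
  have hV1 : (1:G') ∈ V := ⟨hV₀1, by simpa using hV₀1⟩
  have hVU : V ⊆ U := fun v hv => by
    have := hV₀mul (Set.mul_mem_mul hv.1 hV₀1)
    simpa using this
  have hVVinv : ∀ a ∈ V, ∀ b ∈ V, a * b⁻¹ ∈ U :=
    fun a ha b hb => hV₀mul (Set.mul_mem_mul ha.1 (Set.mem_inv.1 hb.2))
  have hpre : π ⁻¹' V ∈ 𝓝 (1:G) := by
    have := hπ.continuousAt (x := (1:G))
    rw [ContinuousAt, map_one] at this
    exact this (hVopen.mem_nhds hV1)
  obtain ⟨F, hFfin, hFeq⟩ := hG (π ⁻¹' V) hpre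
  refine ⟨π '' F, hFfin.image π, ?_⟩
  apply Set.eq_univ_of_forall
  intro y
  have hs : ∃ g : G, π g ∈ (fun v => y * v) '' V := by
    apply hdense.exists_mem_open ((Homeomorph.mulLeft y).isOpenMap V hVopen)
    exact ⟨y, 1, hV1, mul_one y⟩
  obtain ⟨g, v, hv, hgv⟩ := hs
  have hg : g ∈ π ⁻¹' V * F * (π ⁻¹' V) := hFeq ▸ Set.mem_univ g
  obtain ⟨p, hp, q, hq, hpq⟩ := Set.mem_mul.1 hg
  obtain ⟨u, hu, k, hk, huk⟩ := Set.mem_mul.1 hp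
  have hy : y = (π u * π k) * (π q * v⁻¹) := by
    have h1 : π g = y * v := hgv.symm
    have h2 : π g = π u * π k * π q := by rw [← hpq, ← huk]; simp [map_mul]
    rw [h2] at h1
    group
    rw [h1]
    group
  rw [hy]
  exact Set.mul_mem_mul (Set.mul_mem_mul (hVU hu) (Set.mem_image_of_mem π hk))
    (hVVinv (π q) hq v hv)


lemma isClosed_iInter' {X : Type*} (t : TopologicalSpace X) {ι : Sort*} {f : ι → Set X}
    (h : ∀ i, @IsClosed X t (f i)) : @IsClosed X t (⋂ i, f i) := by
  letI := t; exact isClosed_iInter h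

lemma isClosed_preimage' {X Y : Type*} (tX : TopologicalSpace X) [TopologicalSpace Y]
    {f : X → Y} (hf : Continuous[tX, inferInstance] f) {s : Set Y} (hs : IsClosed s) :
    @IsClosed X tX (f ⁻¹' s) := by
  letI := tX; exact IsClosed.preimage hf hs

section Weak
variable {E E' : Type*} [NormedAddCommGroup E] [NormedSpace ℂ E]
  [NormedAddCommGroup E'] [NormedSpace ℂ E']

lemma weak_cont_eval :
    Continuous[weakTopology E, Pi.topologicalSpace] (fun (x : E) (φ : E →L[ℂ] ℂ) => φ x) :=
  continuous_induced_dom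

lemma weak_cont_clm (φ : E →L[ℂ] ℂ) : Continuous[weakTopology E, inferInstance] ⇑φ := by
  have h1 : Continuous[Pi.topologicalSpace, inferInstance]
      (fun f : (E →L[ℂ] ℂ) → ℂ => f φ) := continuous_apply φ
  exact @Continuous.comp E ((E →L[ℂ] ℂ) → ℂ) ℂ (weakTopology E) Pi.topologicalSpace
    inferInstance _ _ h1 weak_cont_eval

lemma norm_to_weak : Continuous[inferInstance, weakTopology E] (id : E → E) := by
  have h : Continuous (fun (x : E) (φ : E →L[ℂ] ℂ) => φ x) :=
    continuous_pi fun φ => φ.continuous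
  show Continuous[inferInstance,
    TopologicalSpace.induced (fun (x : E) (φ : E →L[ℂ] ℂ) => φ x) Pi.topologicalSpace]
      (id : E → E)
  exact continuous_induced_rng.2 h

lemma weak_t2 : @T2Space E (weakTopology E) := by
  have hinj : Function.Injective (fun (x : E) (φ : E →L[ℂ] ℂ) => φ x) := by
    intro x y hxy
    by_contra hne
    obtain ⟨φ, -, hφ⟩ := exists_dual_vector ℂ (x - y) (norm_ne_zero_iff.2 (sub_ne_zero.2 hne))
    have h2 : φ x = φ y := congrFun hxy φ
    rw [map_sub, h2, sub_self] at hφ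
    have h3 : ‖x - y‖ = 0 := Complex.ofReal_eq_zero.1 hφ.symm
    exact hne (sub_eq_zero.1 (norm_eq_zero.1 h3))
  exact @T2Space.of_injective_continuous E ((E →L[ℂ] ℂ) → ℂ) (weakTopology E) _ _ _ hinj weak_cont_eval

/-- A norm-closed subspace is weakly closed. -/
lemma weakly_closed_of_closed (p : Submodule ℂ E) (hp : IsClosed (p : Set E)) :
    @IsClosed E (weakTopology E) (p : Set E) := by
  have heq : (p : Set E) =
      ⋂ φ : {φ : E →L[ℂ] ℂ // ∀ y ∈ p, φ y = 0}, (φ : E →L[ℂ] ℂ) ⁻¹' ({0} : Set ℂ) := by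
    ext x
    simp only [Set.mem_iInter, Set.mem_preimage, Set.mem_singleton_iff]
    constructor
    · intro hx φ; exact φ.2 x hx
    · intro hx
      by_contra hxp
      have hQx : (Submodule.Quotient.mk x : E ⧸ p) ≠ 0 := by
        simpa [Submodule.Quotient.mk_eq_zero] using hxp
      obtain ⟨g, -, hg⟩ := exists_dual_vector ℂ (Submodule.Quotient.mk x : E ⧸ p) (norm_ne_zero_iff.2 hQx)
      have hQcont : Continuous p.mkQ :=
        AddMonoidHomClass.continuous_of_bound p.mkQ 1
          (fun y => by simpa using Submodule.Quotient.norm_mk_le p y)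
      set φ : E →L[ℂ] ℂ :=
        g.comp ⟨p.mkQ, hQcont⟩ with hφdef
      have hφ0 : ∀ y ∈ p, φ y = 0 := by
        intro y hy
        simp only [hφdef, ContinuousLinearMap.comp_apply, ContinuousLinearMap.coe_mk']
        have : (Submodule.Quotient.mk y : E ⧸ p) = 0 := (Submodule.Quotient.mk_eq_zero p).2 hy
        rw [show p.mkQ y = (Submodule.Quotient.mk y : E ⧸ p) from rfl, this, map_zero]
      have h5 := hx ⟨φ, hφ0⟩
      have h6 : φ x = ‖(Submodule.Quotient.mk x : E ⧸ p)‖ := hg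
      rw [h5] at h6
      have h7 : ‖(Submodule.Quotient.mk x : E ⧸ p)‖ = 0 := by exact_mod_cast h6.symm
      exact hQx (norm_eq_zero.1 h7)
  rw [heq]
  exact isClosed_iInter' (weakTopology E) fun φ =>
    isClosed_preimage' (weakTopology E) (weak_cont_clm (φ : E →L[ℂ] ℂ)) isClosed_singleton

end Weak



lemma continuous_pi' {X : Type*} (tX : TopologicalSpace X) {ι : Type*} {π : ι → Type*}
    [∀ i, TopologicalSpace (π i)] {f : X → ∀ i, π i}
    (h : ∀ i, Continuous[tX, inferInstance] fun a => f a i) :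
    Continuous[tX, Pi.topologicalSpace] f := by
  letI := tX; exact continuous_pi h

lemma continuous_induced_rng' {X Y Z : Type*} (tX : TopologicalSpace X)
    (tZ : TopologicalSpace Z) {f : Y → Z} {g : X → Y}
    (h : Continuous[tX, tZ] (f ∘ g)) :
    Continuous[tX, TopologicalSpace.induced f tZ] g := by
  letI := tX; letI := tZ; exact continuous_induced_rng.2 h

lemma continuous_id_iff_le' {X : Type*} (t t' : TopologicalSpace X)
    (h : Continuous[t, t'] id) : t ≤ t' := continuous_id_iff_le.1 h

lemma mem_of_tendsto' {X : Type*} (t : TopologicalSpace X) {Y : Type*} {s : Set X}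
    {u : Y → X} {l : Filter Y} {a : X} (hne : l.NeBot) (hs : @IsClosed X t s)
    (hu : Tendsto u l (@nhds X t a)) (h : ∀ y, u y ∈ s) : a ∈ s := by
  letI := t; exact hs.mem_of_tendsto hu (Filter.Eventually.of_forall h)

lemma isCompact_isClosed' {X : Type*} (t : TopologicalSpace X) (ht2 : @T2Space X t)
    {s : Set X} (hs : @IsCompact X t s) : @IsClosed X t s := by
  letI := t; haveI := ht2; exact hs.isClosed

lemma isCompact_inter_right' {X : Type*} (t : TopologicalSpace X) {s u : Set X}
    (hs : @IsCompact X t s) (hu : @IsClosed X t u) : @IsCompact X t (s ∩ u) := by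
  letI := t; exact hs.inter_right hu

lemma inducing_isCompact_of_image {X Y : Type*} (tX : TopologicalSpace X)
    (tY : TopologicalSpace Y) {f : X → Y} (h : tX = TopologicalSpace.induced f tY)
    {s : Set X} (himg : @IsCompact Y tY (f '' s)) : @IsCompact X tX s := by
  letI := tX; letI := tY; exact (Topology.IsInducing.isCompact_iff ⟨h⟩).2 himg

section Weak2

variable {E' E : Type*} [NormedAddCommGroup E'] [NormedSpace ℂ E']
  [NormedAddCommGroup E] [NormedSpace ℂ E]

lemma weak_cont_T (T : E' →L[ℂ] E) : Continuous[weakTopology E', weakTopology E] ⇑T := by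
  show Continuous[weakTopology E',
    TopologicalSpace.induced (fun (x : E) (φ : E →L[ℂ] ℂ) => φ x) Pi.topologicalSpace] ⇑T
  refine continuous_induced_rng' (weakTopology E') Pi.topologicalSpace ?_
  have h : ∀ ψ : E →L[ℂ] ℂ, Continuous[weakTopology E', inferInstance]
      (fun F : E' => ψ (T F)) := fun ψ => weak_cont_clm (ψ.comp T)
  exact continuous_pi' (weakTopology E') h

lemma weak_induced (T : E' →L[ℂ] E)
    (hsur : ∀ φ : E' →L[ℂ] ℂ, ∃ ψ : E →L[ℂ] ℂ, ∀ F, ψ (T F) = φ F) :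
    weakTopology E' = TopologicalSpace.induced (⇑T) (weakTopology E) := by
  apply le_antisymm
  · exact continuous_id_iff_le' _ _
      (continuous_induced_rng' (weakTopology E') (weakTopology E) (weak_cont_T T))
  · have : Continuous[TopologicalSpace.induced (⇑T) (weakTopology E),
        TopologicalSpace.induced (fun (x : E') (φ : E' →L[ℂ] ℂ) => φ x) Pi.topologicalSpace]
        (id : E' → E') := by
      refine continuous_induced_rng' _ Pi.topologicalSpace
        (continuous_pi' _ fun φ => ?_)
      obtain ⟨ψ, hψ⟩ := hsur φ
      have h1 : Continuous[TopologicalSpace.induced (⇑T) (weakTopology E), weakTopology E]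
          (⇑T) := continuous_induced_dom
      have h2 : Continuous[TopologicalSpace.induced (⇑T) (weakTopology E), inferInstance]
          (fun F : E' => ψ (T F)) :=
        @Continuous.comp E' E ℂ (TopologicalSpace.induced (⇑T) (weakTopology E))
          (weakTopology E) inferInstance _ _ (weak_cont_clm ψ) h1
      have h3 : (fun F : E' => φ F) = fun F : E' => ψ (T F) := funext fun F => (hψ F).symm
      show Continuous[TopologicalSpace.induced (⇑T) (weakTopology E), inferInstance]
          (fun F : E' => φ ((id : E' → E') F))
      simpa [h3] using h2
    exact continuous_id_iff_le' _ _ this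

end Weak2


lemma quotient_wap {G : Type*} [Group G] [TopologicalSpace G] [IsTopologicalGroup G]
    {G' : Type*} [Group G'] [TopologicalSpace G'] [IsTopologicalGroup G']
    (hRW : EveryRUCIsWAP G) (π : G →* G') (hπ : Continuous π)
    (hdense : DenseRange π) : EveryRUCIsWAP G' := by
  classical
  intro f hL hR hB
  obtain ⟨C, hC⟩ := hB
  -- continuity of f
  have hfc : Continuous f := by
    rw [continuous_iff_continuousAt]
    intro g₀
    rw [ContinuousAt, Metric.tendsto_nhds]
    intro ε hε
    obtain ⟨U, hU, hUf⟩ := hL ε hε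
    have hev : {g : G' | g₀⁻¹ * g ∈ U} ∈ 𝓝 g₀ := by
      have hc : ContinuousAt (fun g : G' => g₀⁻¹ * g) g₀ :=
        (continuous_const.mul continuous_id).continuousAt
      have : (fun g : G' => g₀⁻¹ * g) g₀ = 1 := by group
      exact hc.preimage_mem_nhds (by simpa using hU)
    filter_upwards [hev] with g hg
    rw [dist_eq_norm, norm_sub_rev]
    exact hUf g₀ g hg
  set E' := BoundedContinuousFunction G' ℂ
  set E := BoundedContinuousFunction G ℂ
  -- translates of f as bounded continuous functions
  set trans : G' → E' := fun y =>
    BoundedContinuousFunction.ofNormedAddCommGroup (fun z => f (y * z))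
      (hfc.comp (continuous_mul_left y)) C (fun z => hC _) with htrans
  have htrans_apply : ∀ y z, trans y z = f (y * z) := fun y z => rfl
  set πC : C(G, G') := ⟨π, hπ⟩ with hπC
  -- the composition operator
  set Tlin : E' →ₗ[ℂ] E :=
    { toFun := fun F => F.compContinuous πC
      map_add' := by intros; ext z; rfl
      map_smul' := by intros; ext z; rfl } with hTlin
  set T : E' →L[ℂ] E := Tlin.mkContinuous 1
    (fun F => by rw [one_mul]; exact F.norm_compContinuous_le πC) with hT
  have hT_apply : ∀ (F : E') (g : G), T F g = F (π g) := fun F g => rfl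
  have hTnorm : ∀ F : E', ‖T F‖ = ‖F‖ := by
    intro F
    refine le_antisymm (by exact F.norm_compContinuous_le πC) ?_
    have hsetcl : IsClosed {y : G' | ‖F y‖ ≤ ‖T F‖} :=
      isClosed_le F.continuous.norm continuous_const
    have hsub : Set.range π ⊆ {y : G' | ‖F y‖ ≤ ‖T F‖} := by
      rintro y ⟨g, rfl⟩
      have := (T F).norm_coe_le_norm g
      rwa [hT_apply] at this
    have huniv : (Set.univ : Set G') ⊆ {y : G' | ‖F y‖ ≤ ‖T F‖} := by
      rw [← hdense.closure_range]
      exact closure_minimal hsub hsetcl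
    exact (BoundedContinuousFunction.norm_le (norm_nonneg _)).2 fun y => huniv (mem_univ y)
  have hTinj : Function.Injective ⇑T := by
    intro a b hab
    have h1 : ‖a - b‖ = ‖T (a - b)‖ := (hTnorm _).symm
    rw [map_sub, hab, sub_self] at h1
    exact sub_eq_zero.1 (norm_eq_zero.1 (h1.trans norm_zero))
  -- Hahn-Banach factorization
  have hsur : ∀ φ : E' →L[ℂ] ℂ, ∃ ψ : E →L[ℂ] ℂ, ∀ F, ψ (T F) = φ F := by
    intro φ
    set p : Submodule ℂ E := LinearMap.range (T : E' →ₗ[ℂ] E) with hp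
    have hTinj' : Function.Injective (T : E' →ₗ[ℂ] E) := hTinj
    set e : E' ≃ₗ[ℂ] p := LinearEquiv.ofInjective (T : E' →ₗ[ℂ] E) hTinj' with he
    have hecoe : ∀ F : E', ((e F : p) : E) = T F := fun F =>
      LinearEquiv.ofInjective_apply _ F
    set ℓ : p →ₗ[ℂ] ℂ := (φ : E' →ₗ[ℂ] ℂ).comp (e.symm : p →ₗ[ℂ] E') with hℓ
    have hℓ_apply : ∀ z : p, ℓ z = φ (e.symm z) := fun z => rfl
    have hbound : ∀ z : p, ‖ℓ z‖ ≤ ‖φ‖ * ‖z‖ := by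
      intro z
      have h1 : T (e.symm z) = (z : E) := by
        have h := hecoe (e.symm z)
        rw [e.apply_symm_apply] at h
        exact h.symm
      calc ‖ℓ z‖ = ‖φ (e.symm z)‖ := by rw [hℓ_apply]
      _ ≤ ‖φ‖ * ‖e.symm z‖ := φ.le_opNorm _
      _ = ‖φ‖ * ‖T (e.symm z)‖ := by rw [hTnorm]
      _ = ‖φ‖ * ‖z‖ := by rw [h1]; rfl
    set ℓc : p →L[ℂ] ℂ := LinearMap.mkContinuous ℓ ‖φ‖ hbound with hℓc
    obtain ⟨ψ, hψext, -⟩ := exists_extension_norm_eq p ℓc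
    refine ⟨ψ, fun F => ?_⟩
    have hmem : T F ∈ p := ⟨F, rfl⟩
    have h2 : ψ (T F) = ℓc ⟨T F, hmem⟩ := hψext ⟨T F, hmem⟩
    have h3 : e.symm ⟨T F, hmem⟩ = F := by
      apply e.injective
      rw [e.apply_symm_apply]
      exact Subtype.ext (hecoe F).symm
    rw [h2]
    show ℓ ⟨T F, hmem⟩ = φ F
    rw [hℓ_apply, h3]
  -- f ∘ π is WAP on G
  have hfπ : IsWAP (fun g : G => f (π g)) := by
    apply hRW
    · intro ε hε
      obtain ⟨U, hU, hUf⟩ := hL ε hε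
      refine ⟨π ⁻¹' U, ?_, fun g h hgh => ?_⟩
      · have := hπ.continuousAt (x := (1:G))
        rw [ContinuousAt, map_one] at this
        exact this hU
      · exact hUf (π g) (π h) (by simpa [map_mul, map_inv] using hgh)
    · intro ε hε
      obtain ⟨U, hU, hUf⟩ := hR ε hε
      refine ⟨π ⁻¹' U, ?_, fun g h hgh => ?_⟩
      · have := hπ.continuousAt (x := (1:G))
        rw [ContinuousAt, map_one] at this
        exact this hU
      · exact hUf (π g) (π h) (by simpa [map_mul, map_inv] using hgh)
    · exact ⟨C, fun g => hC _⟩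
  obtain ⟨-, -, S, hScpt, hStr⟩ := hfπ
  -- the preimage of S under T
  set S' : Set E' := ⇑T ⁻¹' S with hS'
  have hind : weakTopology E' = TopologicalSpace.induced (⇑T) (weakTopology E) :=
    weak_induced T hsur
  have hrange_cl : IsClosed (Set.range ⇑T) := by
    have hiso : Isometry ⇑T := AddMonoidHomClass.isometry_of_norm T hTnorm
    exact hiso.isClosedEmbedding.isClosed_range
  have hrange_wcl : @IsClosed E (weakTopology E) (Set.range ⇑T) := by
    have := weakly_closed_of_closed (LinearMap.range (T : E' →ₗ[ℂ] E))
      (by rwa [LinearMap.coe_range])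
    rwa [LinearMap.coe_range] at this
  have hScl : @IsCompact E (weakTopology E) (S ∩ Set.range ⇑T) :=
    isCompact_inter_right' (weakTopology E) hScpt hrange_wcl
  have hS'cpt : @IsCompact E' (weakTopology E') S' := by
    refine inducing_isCompact_of_image (weakTopology E') (weakTopology E) hind ?_
    rwa [Set.image_preimage_eq_inter_range]
  -- the translates lie in S'
  refine ⟨hL, hR, S', hS'cpt, fun y => ?_⟩
  refine ⟨trans y, ?_, fun x => rfl⟩
  show T (trans y) ∈ S
  have hne : (comap π (𝓝 y)).NeBot := by
    refine Filter.comap_neBot fun t ht => ?_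
    obtain ⟨z, hzt, g, rfl⟩ := mem_closure_iff_nhds.1 (hdense y) t ht
    exact ⟨g, hzt⟩
  set m : G → E := fun g => T (trans (π g)) with hm
  have hmS : ∀ g : G, m g ∈ S := by
    intro g
    obtain ⟨F₀, hF₀S, hF₀⟩ := hStr g
    have : F₀ = m g := by
      ext x
      rw [hF₀ x, hm]
      show f (π (g * x)) = T (trans (π g)) x
      rw [hT_apply, htrans_apply, map_mul]
    rwa [this] at hF₀S
  have htends : Tendsto m (comap π (𝓝 y)) (𝓝 (T (trans y))) := by
    rw [Metric.tendsto_nhds]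
    intro ε hε
    obtain ⟨U, hU, hUf⟩ := hR (ε/2) (by linarith)
    have hev : {g : G | π g * y⁻¹ ∈ U} ∈ comap π (𝓝 y) := by
      have hc : ContinuousAt (fun h' : G' => h' * y⁻¹) y :=
        (continuous_id.mul continuous_const).continuousAt
      refine mem_comap.2 ⟨(fun h' : G' => h' * y⁻¹) ⁻¹' U,
        hc.preimage_mem_nhds (by simpa using hU), ?_⟩
      intro g hg
      exact hg
    filter_upwards [hev] with g hg
    have hle : dist (m g) (T (trans y)) ≤ ε/2 := by
      rw [BoundedContinuousFunction.dist_le (by linarith)]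
      intro x
      rw [hm]
      show dist (T (trans (π g)) x) (T (trans y) x) ≤ ε/2
      rw [hT_apply, hT_apply, htrans_apply, htrans_apply, dist_eq_norm, norm_sub_rev]
      have h2 : (π g * π x) * (y * π x)⁻¹ ∈ U := by
        have : (π g * π x) * (y * π x)⁻¹ = π g * y⁻¹ := by group
        rw [this]; exact hg
      exact (hUf (y * π x) (π g * π x) h2).le
    linarith [hle]
  have htendsW : Tendsto m (comap π (𝓝 y)) (@nhds E (weakTopology E) (T (trans y))) := by
    have h1 := @Continuous.tendsto E E _ (weakTopology E) id norm_to_weak (T (trans y))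
    exact h1.comp htends
  have hSclosed : @IsClosed E (weakTopology E) S :=
    isCompact_isClosed' (weakTopology E) weak_t2 hScpt
  exact mem_of_tendsto' (weakTopology E) hne hSclosed htendsW hmS


/-- **Lemma 4.5.**  Let `G` be a Roelcke precompact Polish group such that every bounded
Roelcke uniformly continuous function on `G` is weakly almost periodic.  Then every quotient
`G'` of `G` (a Polish group with a continuous homomorphism `π : G → G'` with dense image) is
Roelcke precompact and every bounded Roelcke uniformly continuous function on `G'` is weakly
almost periodic; in particular weakly almost periodic functions on `G'` separate points from
closed sets, i.e. `G'` is a WAP quotient of `G`. -/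
theorem quotient_ruc_eq_wap {G : Type*} [Group G] [TopologicalSpace G] [IsTopologicalGroup G]
    [PolishSpace G] (hG : RoelckePrecompact G) (hRW : EveryRUCIsWAP G)
    (G' : Type*) [Group G'] [TopologicalSpace G'] [IsTopologicalGroup G'] [PolishSpace G']
    (π : G →* G') (hπ : Continuous π) (hdense : DenseRange π) :
    RoelckePrecompact G' ∧ EveryRUCIsWAP G' ∧
      ∀ (A : Set G') (x : G'), IsClosed A → x ∉ A →
        ∃ f : G' → ℂ, IsWAP f ∧ f x ∉ closure (f '' A) := by
  refine ⟨roelcke_quotient hG π hπ hdense, quotient_wap hRW π hπ hdense, ?_⟩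
  intro A x hA hx
  obtain ⟨f, hLf, hRf, hBf, hfx, hfA⟩ := exists_separating_ruc A x hA hx
  refine ⟨f, quotient_wap hRW π hπ hdense f hLf hRf hBf, ?_⟩
  have himg : f '' A ⊆ {0} := by rintro z ⟨a, ha, rfl⟩; simp [hfA a ha]
  have hcl : closure (f '' A) ⊆ {0} := closure_minimal himg isClosed_singleton
  rw [hfx]
  intro hmem
  simpa using hcl hmem
end
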